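/- Let s ≥ 3. Work in the multivariate polynomial ring over ℂ whose variables y_{ab} are indexed by unordered pairs {a, b} of elements of Fin s (the entries of a generic symmetric s × s matrix, so y_{ab} = y_{ba}), and set D(a,b) := y_{aa} * y_{bb} − (y_{ab})^2. Then the ℂ-linear span of the set of polynomials {D(i,j) − D(j,k) + D(k,l) − D(l,i) : i, j, k, l ∈ Fin s pairwise distinct} has dimension s*(s−3)/2 (that is, C(s,2) − s). -/

import Mathlib

open MvPolynomial

/-- The principal 2×2 minor `D(a,b) = y_{aa} y_{bb} − y_{ab}²` of a generic symmetric
`s × s` matrix whose entries are variables indexed by unordered pairs. -/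
noncomputable def genericPrincMinor (s : ℕ) (a b : Fin s) : MvPolynomial (Sym2 (Fin s)) ℂ :=
  X (Sym2.mk a a) * X (Sym2.mk b b) - (X (Sym2.mk a b)) ^ 2

open Module

namespace GRel

variable (s : ℕ)

/-- The minor as a function on unordered pairs. -/
noncomputable def dd : Sym2 (Fin s) → MvPolynomial (Sym2 (Fin s)) ℂ :=
  Sym2.lift ⟨fun a b => X s(a, a) * X s(b, b) - (X s(a, b)) ^ 2, by
    intro a b
    have h : s(a, b) = s(b, a) := Sym2.eq_swap
    show X s(a, a) * X s(b, b) - X s(a, b) ^ 2 = X s(b, b) * X s(a, a) - X s(b, a) ^ 2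
    rw [h, mul_comm]⟩

@[simp] lemma dd_mk (a b : Fin s) : dd s s(a, b) = genericPrincMinor s a b := by
  simp [dd, genericPrincMinor]

/-- Coefficient of the monomial `X_e^2` in a minor. -/
lemma coeff_dd (e : Sym2 (Fin s)) (he : ¬ e.IsDiag) (a b : Fin s) :
    coeff (Finsupp.single e 2) (genericPrincMinor s a b)
      = if s(a, b) = e then -1 else 0 := by
  have hXX : (X s(a,a) * X s(b,b) : MvPolynomial (Sym2 (Fin s)) ℂ)
      = monomial (Finsupp.single s(a,a) 1 + Finsupp.single s(b,b) 1) 1 := by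
    rw [X, X, monomial_mul, one_mul]
  have hX2 : ((X s(a,b)) ^ 2 : MvPolynomial (Sym2 (Fin s)) ℂ)
      = monomial (Finsupp.single s(a,b) 2) 1 := X_pow_eq_monomial
  have hne : Finsupp.single s(a,a) 1 + Finsupp.single s(b,b) 1
      ≠ (Finsupp.single e 2 : Sym2 (Fin s) →₀ ℕ) := by
    intro h
    have h1 : s(a, a) ≠ e := fun h' => he (h' ▸ (Sym2.mk_isDiag_iff.2 rfl))
    have h2 : s(b, b) ≠ e := fun h' => he (h' ▸ (Sym2.mk_isDiag_iff.2 rfl))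
    have := DFunLike.congr_fun h e
    simp [Finsupp.single_apply, if_neg h1, if_neg h2] at this
  rw [genericPrincMinor, coeff_sub, hXX, hX2, coeff_monomial, coeff_monomial,
    if_neg hne]
  by_cases h : s(a,b) = e
  · rw [if_pos (by rw [h]), if_pos h]; ring
  · rw [if_neg (fun hc => h (by
      have := (Finsupp.single_left_inj (by norm_num : (2:ℕ) ≠ 0)).1 hc
      exact this)), if_neg h]
    ring

/-- unsigned incidence vector of an edge -/
noncomputable def chi : Sym2 (Fin s) → (Fin s → ℂ) :=
  Sym2.lift ⟨fun a b => Pi.single a 1 + Pi.single b 1, fun a b => add_comm _ _⟩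

@[simp] lemma chi_mk (a b : Fin s) : chi s s(a, b) = Pi.single a 1 + Pi.single b 1 := by
  simp [chi]

/-- diagonal indicator -/
def psi : Sym2 (Fin s) → (Fin s → ℂ) := fun e v => if e = s(v, v) then 1 else 0

lemma psi_offdiag {a b : Fin s} (h : a ≠ b) : psi s s(a, b) = 0 := by
  funext v
  simp only [psi]
  rw [if_neg, Pi.zero_apply]
  intro hc
  obtain ⟨h1, h2⟩ | ⟨h1, h2⟩ := Sym2.eq_iff.1 hc <;> exact h (h1.trans h2.symm)

lemma psi_diag (a : Fin s) : psi s s(a, a) = Pi.single a 1 := by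
  funext v
  by_cases h : v = a
  · subst h; simp [psi]
  · have hne : ¬ (s(a,a) = s(v,v)) := by
      intro hc
      obtain ⟨h1, h2⟩ | ⟨h1, h2⟩ := Sym2.eq_iff.1 hc <;> exact h h1.symm
    simp [psi, hne, Pi.single_eq_of_ne h]

/-- The combined linear map whose kernel captures the relations. -/
noncomputable def Psi : (Sym2 (Fin s) →₀ ℂ) →ₗ[ℂ] (Fin s → ℂ) × (Fin s → ℂ) :=
  (Finsupp.linearCombination ℂ (chi s)).prod (Finsupp.linearCombination ℂ (psi s))

@[simp] lemma Psi_single (e : Sym2 (Fin s)) :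
    Psi s (Finsupp.single e 1) = (chi s e, psi s e) := by
  simp [Psi, Finsupp.linearCombination_single]

/-- abbreviation for the standard basis vector -/
noncomputable def P (a : Fin s) : Fin s → ℂ := Pi.single a 1

/-- a "star" element hitting `(2 • δ_a, 0)` -/
noncomputable def tvec (a b c : Fin s) : Sym2 (Fin s) →₀ ℂ :=
  Finsupp.single s(a, b) 1 + Finsupp.single s(a, c) 1 - Finsupp.single s(b, c) 1

lemma chi_mk' (a b : Fin s) : chi s s(a, b) = P s a + P s b := chi_mk s a b

lemma Psi_tvec {a b c : Fin s} (hab : a ≠ b) (hac : a ≠ c) (hbc : b ≠ c) :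
    Psi s (tvec s a b c) = ((2 : ℂ) • P s a, 0) := by
  rw [tvec, map_sub, map_add, Psi_single, Psi_single, Psi_single]
  rw [Prod.mk_add_mk, Prod.mk_sub_mk, chi_mk', chi_mk', chi_mk',
    psi_offdiag s hab, psi_offdiag s hac, psi_offdiag s hbc]
  refine Prod.ext ?_ (by simp)
  show P s a + P s b + (P s a + P s c) - (P s b + P s c) = (2:ℂ) • P s a
  rw [two_smul]
  abel

lemma Psi_diagvec (a b c : Fin s) (hab : a ≠ b) (hac : a ≠ c) (hbc : b ≠ c) :
    Psi s (Finsupp.single s(a,a) 1 - tvec s a b c) = (0, P s a) := by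
  rw [map_sub, Psi_single, Psi_tvec s hab hac hbc, chi_mk']
  have : psi s s(a,a) = P s a := psi_diag s a
  rw [this, Prod.mk_sub_mk]
  refine Prod.ext ?_ (by simp)
  show P s a + P s a - (2:ℂ) • P s a = 0
  rw [two_smul]; abel

lemma exists_companions (hs : 3 ≤ s) (a : Fin s) :
    ∃ b c : Fin s, a ≠ b ∧ a ≠ c ∧ b ≠ c := by
  have hz0 : (0 : ℕ) < s := by omega
  have hz1 : (1 : ℕ) < s := by omega
  have hz2 : (2 : ℕ) < s := by omega
  set z0 : Fin s := ⟨0, hz0⟩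
  set z1 : Fin s := ⟨1, hz1⟩
  set z2 : Fin s := ⟨2, hz2⟩
  by_cases h0 : a = z0
  · exact ⟨z1, z2, by simp [h0, z0, z1, Fin.ext_iff], by simp [h0, z0, z2, Fin.ext_iff],
      by simp [z1, z2, Fin.ext_iff]⟩
  · by_cases h2 : a = z2
    · exact ⟨z0, z1, by simp [h2, z0, z2, Fin.ext_iff], by simp [h2, z1, z2, Fin.ext_iff],
        by simp [z0, z1, Fin.ext_iff]⟩
    · exact ⟨z0, z2, h0, h2, by simp [z0, z2, Fin.ext_iff]⟩

lemma Psi_surjective (hs : 3 ≤ s) : Function.Surjective (Psi s) := by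
  rw [← LinearMap.range_eq_top, eq_top_iff,
    ← ((Pi.basisFun ℂ (Fin s)).prod (Pi.basisFun ℂ (Fin s))).span_eq, Submodule.span_le]
  rintro x ⟨i, rfl⟩
  obtain a | a := i
  · obtain ⟨b, c, hab, hac, hbc⟩ := exists_companions s hs a
    refine ⟨(2:ℂ)⁻¹ • tvec s a b c, ?_⟩
    rw [map_smul, Psi_tvec s hab hac hbc, Prod.smul_mk, smul_smul, smul_zero]
    norm_num
    try rfl
    try exact Prod.ext rfl rfl
  · obtain ⟨b, c, hab, hac, hbc⟩ := exists_companions s hs a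
    refine ⟨_, (Psi_diagvec s a b c hab hac hbc).trans ?_⟩
    refine Prod.ext ?_ ?_
    · show (0 : Fin s → ℂ) = _
      rw [Basis.prod_apply_inr_fst]
    · show P s a = _
      rw [Basis.prod_apply_inr_snd, Pi.basisFun_apply]
      rfl


noncomputable def Phi : (Sym2 (Fin s) →₀ ℂ) →ₗ[ℂ] MvPolynomial (Sym2 (Fin s)) ℂ :=
  Finsupp.linearCombination ℂ (dd s)

lemma arith (hs : 3 ≤ s) : s * (s+1)/2 - 2 * s = s * (s-3) / 2 := by
  have h4 : s - 3 + 4 = s + 1 := by omega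
  have key : s*(s+1) = s*(s-3) + 4*s := by
    calc s*(s+1) = s*((s-3)+4) := by rw [h4]
    _ = s*(s-3) + 4*s := by ring
  have hev : (s*(s-3)) % 2 = 0 := by
    rw [← Nat.even_iff]
    rcases Nat.even_or_odd s with h | h
    · exact Nat.even_mul.2 (Or.inl h)
    · refine Nat.even_mul.2 (Or.inr ?_)
      rw [Nat.even_iff]; rw [Nat.odd_iff] at h; omega
  omega

lemma finrank_ker_Psi (hs : 3 ≤ s) :
    finrank ℂ (LinearMap.ker (Psi s)) = s * (s-3) / 2 := by
  have h := LinearMap.finrank_range_add_finrank_ker (Psi s)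
  have hdom : finrank ℂ (Sym2 (Fin s) →₀ ℂ) = s * (s+1) / 2 := by
    rw [Module.finrank_finsupp_self, Sym2.card, Fintype.card_fin, Nat.choose_two_right,
      Nat.add_sub_cancel, Nat.mul_comm]
  have hran : LinearMap.range (Psi s) = ⊤ := LinearMap.range_eq_top.2 (Psi_surjective s hs)
  rw [hran, finrank_top, hdom] at h
  have htarget : finrank ℂ ((Fin s → ℂ) × (Fin s → ℂ)) = 2 * s := by
    rw [Module.finrank_prod, Module.finrank_fintype_fun_eq_card, Fintype.card_fin]
    omega
  rw [htarget] at h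
  have h2 : 2 * s ≤ s * (s + 1) / 2 := by
    have : 4 * s ≤ s * (s+1) := by nlinarith
    omega
  rw [← arith s hs]
  omega

/-- the generator as image under `Phi` of a combinatorial vector -/
noncomputable def gvec (i j k l : Fin s) : Sym2 (Fin s) →₀ ℂ :=
  Finsupp.single s(i, j) 1 - Finsupp.single s(j, k) 1
    + Finsupp.single s(k, l) 1 - Finsupp.single s(l, i) 1

lemma Phi_gvec (i j k l : Fin s) :
    Phi s (gvec s i j k l)
      = genericPrincMinor s i j - genericPrincMinor s j k
          + genericPrincMinor s k l - genericPrincMinor s l i := by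
  simp [Phi, gvec, map_add, map_sub, Finsupp.linearCombination_single]

lemma gvec_mem_ker (i j k l : Fin s) (hij : i ≠ j) (hjk : j ≠ k) (hkl : k ≠ l)
    (hli : l ≠ i) : gvec s i j k l ∈ LinearMap.ker (Psi s) := by
  rw [LinearMap.mem_ker, gvec, map_sub, map_add, map_sub, Psi_single, Psi_single,
    Psi_single, Psi_single, psi_offdiag s hij, psi_offdiag s hjk, psi_offdiag s hkl,
    psi_offdiag s hli, chi_mk', chi_mk', chi_mk', chi_mk']
  refine Prod.ext ?_ (by simp)
  show P s i + P s j - (P s j + P s k) + (P s k + P s l) - (P s l + P s i) = 0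
  abel


noncomputable def G (i j k l : Fin s) : MvPolynomial (Sym2 (Fin s)) ℂ :=
  genericPrincMinor s i j - genericPrincMinor s j k
    + genericPrincMinor s k l - genericPrincMinor s l i

variable (z0 z1 z2 : Fin s)

noncomputable def Fam : Sym2 (Fin s) → MvPolynomial (Sym2 (Fin s)) ℂ :=
  Sym2.lift ⟨fun a b =>
    if a = z0 then G s z0 b z1 z2
    else if b = z0 then G s z0 a z1 z2
    else G s a b z0 z1 + G s b a z0 z1, by
      intro a b
      show (if a = z0 then G s z0 b z1 z2 else if b = z0 then G s z0 a z1 z2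
            else G s a b z0 z1 + G s b a z0 z1)
          = (if b = z0 then G s z0 a z1 z2 else if a = z0 then G s z0 b z1 z2
            else G s b a z0 z1 + G s a b z0 z1)
      split_ifs with h1 h2 h2 <;> first | with_reducible rfl | exact add_comm _ _ | simp_all⟩

lemma Fam_mk_B (j : Fin s) : Fam s z0 z1 z2 s(z0, j) = G s z0 j z1 z2 := by
  simp [Fam]

lemma Fam_mk_A {a b : Fin s} (ha : a ≠ z0) (hb : b ≠ z0) :
    Fam s z0 z1 z2 s(a, b) = G s a b z0 z1 + G s b a z0 z1 := by
  simp [Fam, ha, hb]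

def Pred (e : Sym2 (Fin s)) : Prop := ¬ e.IsDiag ∧ z1 ∉ e ∧ e ≠ s(z0, z2)

instance : DecidablePred (Pred s z0 z1 z2) := fun e => by
  unfold Pred; infer_instance


lemma mk_ne_left {x y : Fin s} {e : Sym2 (Fin s)} (h : x ∉ e) : s(x, y) ≠ e :=
  fun hc => h (hc ▸ Sym2.mem_mk_left x y)

lemma mk_ne_right {x y : Fin s} {e : Sym2 (Fin s)} (h : y ∉ e) : s(x, y) ≠ e :=
  fun hc => h (hc ▸ Sym2.mem_mk_right x y)

lemma entry_A {a b : Fin s} (ha0 : a ≠ z0) (hb0 : b ≠ z0) (e : Sym2 (Fin s))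
    (he : ¬ e.IsDiag) (h1e : z1 ∉ e) (h0e : z0 ∉ e) :
    coeff (Finsupp.single e 2) (Fam s z0 z1 z2 s(a, b))
      = if s(a, b) = e then -2 else 0 := by
  rw [Fam_mk_A s z0 z1 z2 ha0 hb0]
  have k1 : s(b, z0) ≠ e := mk_ne_right s h0e
  have k2 : s(a, z0) ≠ e := mk_ne_right s h0e
  have k3 : s(z0, z1) ≠ e := mk_ne_left s h0e
  have k4 : s(z1, a) ≠ e := mk_ne_left s h1e
  have k5 : s(z1, b) ≠ e := mk_ne_left s h1e
  have hswap : s(b, a) = s(a, b) := Sym2.eq_swap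
  simp only [G, coeff_add, coeff_sub, coeff_dd s e he, if_neg k1, if_neg k2,
    if_neg k3, if_neg k4, if_neg k5, hswap]
  by_cases h : s(a, b) = e
  · rw [if_pos h, if_pos h]; ring
  · rw [if_neg h, if_neg h]; ring

lemma entry_B (j : Fin s) (e : Sym2 (Fin s))
    (he : ¬ e.IsDiag) (h1e : z1 ∉ e) (h02 : e ≠ s(z0, z2)) :
    coeff (Finsupp.single e 2) (Fam s z0 z1 z2 s(z0, j))
      = if s(z0, j) = e then -1 else 0 := by
  rw [Fam_mk_B]
  have k1 : s(j, z1) ≠ e := mk_ne_right s h1e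
  have k2 : s(z1, z2) ≠ e := mk_ne_left s h1e
  have k3 : s(z2, z0) ≠ e := by
    rw [Sym2.eq_swap]; exact fun hc => h02 hc.symm
  simp only [G, coeff_add, coeff_sub, coeff_dd s e he, if_neg k1, if_neg k2, if_neg k3]
  by_cases h : s(z0, j) = e
  · rw [if_pos h]; ring
  · rw [if_neg h]; ring


def SetGen : Set (MvPolynomial (Sym2 (Fin s)) ℂ) :=
  {g : MvPolynomial (Sym2 (Fin s)) ℂ | ∃ i j k l : Fin s,
    i ≠ j ∧ i ≠ k ∧ i ≠ l ∧ j ≠ k ∧ j ≠ l ∧ k ≠ l ∧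
    g = genericPrincMinor s i j - genericPrincMinor s j k
        + genericPrincMinor s k l - genericPrincMinor s l i}

lemma G_mem {i j k l : Fin s} (hij : i ≠ j) (hik : i ≠ k) (hil : i ≠ l)
    (hjk : j ≠ k) (hjl : j ≠ l) (hkl : k ≠ l) : G s i j k l ∈ SetGen s :=
  ⟨i, j, k, l, hij, hik, hil, hjk, hjl, hkl, rfl⟩

lemma span_le_upper :
    Submodule.span ℂ (SetGen s) ≤ Submodule.map (Phi s) (LinearMap.ker (Psi s)) := by
  rw [Submodule.span_le]
  rintro g ⟨i, j, k, l, hij, hik, hil, hjk, hjl, hkl, rfl⟩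
  exact ⟨gvec s i j k l, gvec_mem_ker s i j k l hij hjk hkl (Ne.symm hil),
    Phi_gvec s i j k l⟩

lemma finrank_span_le (hs : 3 ≤ s) :
    finrank ℂ (Submodule.span ℂ (SetGen s)) ≤ s * (s - 3) / 2 := by
  calc finrank ℂ (Submodule.span ℂ (SetGen s))
      ≤ finrank ℂ (Submodule.map (Phi s) (LinearMap.ker (Psi s))) :=
        Submodule.finrank_mono (span_le_upper s)
    _ ≤ finrank ℂ (LinearMap.ker (Psi s)) := Submodule.finrank_map_le _ _
    _ = s * (s - 3) / 2 := finrank_ker_Psi s hs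

variable {z0 z1 z2} in
lemma Fam_mem (h01 : z0 ≠ z1) (h02 : z0 ≠ z2) (h12 : z1 ≠ z2) (e : Sym2 (Fin s))
    (he : Pred s z0 z1 z2 e) :
    Fam s z0 z1 z2 e ∈ Submodule.span ℂ (SetGen s) := by
  induction e using Sym2.ind with | _ a b =>
  obtain ⟨hnd, h1, hne02⟩ := he
  have hab : a ≠ b := fun h => hnd (Sym2.mk_isDiag_iff.2 h)
  have ha1 : a ≠ z1 := fun h => h1 (by rw [← h]; exact Sym2.mem_mk_left a b)
  have hb1 : b ≠ z1 := fun h => h1 (by rw [← h]; exact Sym2.mem_mk_right a b)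
  by_cases ha0 : a = z0
  · subst ha0
    rw [Fam_mk_B]
    have hb2 : b ≠ z2 := fun h => hne02 (by rw [h])
    exact Submodule.subset_span (G_mem s hab h01 h02 hb1 hb2 h12)
  · by_cases hb0 : b = z0
    · subst hb0
      rw [show s(a, b) = s(b, a) from Sym2.eq_swap, Fam_mk_B]
      have ha2 : a ≠ z2 := fun h => hne02 (by rw [h, Sym2.eq_swap])
      exact Submodule.subset_span (G_mem s (Ne.symm hab) h01 h02 ha1 ha2 h12)
    · rw [Fam_mk_A s z0 z1 z2 ha0 hb0]
      exact Submodule.add_mem _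
        (Submodule.subset_span (G_mem s hab ha0 ha1 hb0 hb1 h01))
        (Submodule.subset_span (G_mem s (Ne.symm hab) hb0 hb1 ha0 ha1 h01))


variable {z0 z1 z2}

lemma entry_zero_A (e f : Sym2 (Fin s)) (hend : ¬ e.IsDiag) (h1e : z1 ∉ e)
    (h02e : e ≠ s(z0, z2)) (h0e : z0 ∉ e) (hf : Pred s z0 z1 z2 f) (hfe : f ≠ e) :
    coeff (Finsupp.single e 2) (Fam s z0 z1 z2 f) = 0 := by
  induction f using Sym2.ind with | _ a b =>
  by_cases ha0 : a = z0
  · subst ha0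
    rw [entry_B s a z1 z2 b e hend h1e h02e, if_neg hfe]
  · by_cases hb0 : b = z0
    · subst hb0
      rw [show s(a, b) = s(b, a) from Sym2.eq_swap] at hfe ⊢
      rw [entry_B s b z1 z2 a e hend h1e h02e, if_neg hfe]
    · rw [entry_A s z0 z1 z2 ha0 hb0 e hend h1e h0e, if_neg hfe]

lemma entry_self_A (e : Sym2 (Fin s)) (hend : ¬ e.IsDiag) (h1e : z1 ∉ e)
    (h0e : z0 ∉ e) :
    coeff (Finsupp.single e 2) (Fam s z0 z1 z2 e) = -2 := by
  induction e using Sym2.ind with | _ a b =>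
  have ha0 : a ≠ z0 := fun h => h0e (by rw [← h]; exact Sym2.mem_mk_left a b)
  have hb0 : b ≠ z0 := fun h => h0e (by rw [← h]; exact Sym2.mem_mk_right a b)
  rw [entry_A s z0 z1 z2 ha0 hb0 _ hend h1e h0e, if_pos rfl]

lemma entry_self_B (e : Sym2 (Fin s)) (hend : ¬ e.IsDiag) (h1e : z1 ∉ e)
    (h02e : e ≠ s(z0, z2)) (h0e : z0 ∈ e) :
    coeff (Finsupp.single e 2) (Fam s z0 z1 z2 e) = -1 := by
  obtain ⟨y, rfl⟩ := Sym2.mem_iff_exists.1 h0e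
  rw [entry_B s z0 z1 z2 y _ hend h1e h02e, if_pos rfl]

lemma entry_zero_B (e f : Sym2 (Fin s)) (hend : ¬ e.IsDiag) (h1e : z1 ∉ e)
    (h02e : e ≠ s(z0, z2)) (hfe : f ≠ e) (h0f : z0 ∈ f) :
    coeff (Finsupp.single e 2) (Fam s z0 z1 z2 f) = 0 := by
  obtain ⟨y, rfl⟩ := Sym2.mem_iff_exists.1 h0f
  rw [entry_B s z0 z1 z2 y _ hend h1e h02e, if_neg hfe]

lemma Fam_li :
    LinearIndependent ℂ
      (fun i : {e : Sym2 (Fin s) // Pred s z0 z1 z2 e} =>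
        Fam s z0 z1 z2 (i : Sym2 (Fin s))) := by
  rw [Fintype.linearIndependent_iff]
  intro g h
  have key : ∀ e : Sym2 (Fin s),
      (∑ i : {e : Sym2 (Fin s) // Pred s z0 z1 z2 e},
        g i * coeff (Finsupp.single e 2) (Fam s z0 z1 z2 (i : Sym2 (Fin s)))) = 0 := by
    intro e
    have h2 := congrArg (coeff (Finsupp.single e 2)) h
    rw [coeff_sum] at h2
    simpa [coeff_smul, smul_eq_mul] using h2
  have step1 : ∀ i : {e : Sym2 (Fin s) // Pred s z0 z1 z2 e},
      z0 ∉ (i : Sym2 (Fin s)) → g i = 0 := by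
    intro i hi
    obtain ⟨hnd, h1e, h02e⟩ := i.2
    have hsum := key i
    rw [Fintype.sum_eq_single i (fun j hj => ?_)] at hsum
    · rw [entry_self_A s _ hnd h1e hi] at hsum
      simpa using hsum
    · rw [entry_zero_A s (i : Sym2 (Fin s)) (j : Sym2 (Fin s)) hnd h1e h02e hi j.2
        (fun hc => hj (Subtype.ext hc)), mul_zero]
  have step2 : ∀ i : {e : Sym2 (Fin s) // Pred s z0 z1 z2 e},
      z0 ∈ (i : Sym2 (Fin s)) → g i = 0 := by
    intro i hi
    obtain ⟨hnd, h1e, h02e⟩ := i.2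
    have hsum := key i
    rw [Fintype.sum_eq_single i (fun j hj => ?_)] at hsum
    · rw [entry_self_B s _ hnd h1e h02e hi] at hsum
      simpa using hsum
    · by_cases hz : z0 ∈ (j : Sym2 (Fin s))
      · rw [entry_zero_B s (i : Sym2 (Fin s)) (j : Sym2 (Fin s)) hnd h1e h02e
          (fun hc => hj (Subtype.ext hc)) hz, mul_zero]
      · rw [step1 j hz, zero_mul]
  intro i
  by_cases hz : z0 ∈ (i : Sym2 (Fin s))
  exacts [step2 i hz, step1 i hz]


open Finset in
lemma card_pred (h01 : z0 ≠ z1) (h02 : z0 ≠ z2) (h12 : z1 ≠ z2) (hs : 3 ≤ s) :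
    Fintype.card {e : Sym2 (Fin s) // Pred s z0 z1 z2 e} = s * (s - 3) / 2 := by
  classical
  rw [Fintype.card_subtype]
  set A : Finset (Sym2 (Fin s)) := univ.filter (fun e => e.IsDiag) with hA
  set B : Finset (Sym2 (Fin s)) := univ.filter (fun e => z1 ∈ e) with hB
  have hAcard : A.card = s := by
    have himg : A = Finset.image (fun a : Fin s => s(a, a)) univ := by
      ext e
      induction e using Sym2.ind with | _ x y =>
      simp only [hA, mem_filter, mem_univ, true_and, Finset.mem_image,
        Sym2.mk_isDiag_iff]
      constructor
      · rintro rfl; exact ⟨x, rfl⟩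
      · rintro ⟨a, ha⟩
        obtain ⟨h1, h2⟩ | ⟨h1, h2⟩ := Sym2.eq_iff.1 ha <;> rw [← h1, ← h2]
    rw [himg, Finset.card_image_of_injective _ (fun a b hab => ?_), card_univ,
      Fintype.card_fin]
    obtain ⟨h1, h2⟩ | ⟨h1, h2⟩ := Sym2.eq_iff.1 hab <;> exact h1
  have hBcard : B.card = s := by
    have himg : B = Finset.image (fun x : Fin s => s(z1, x)) univ := by
      ext e
      simp only [hB, mem_filter, mem_univ, true_and, Finset.mem_image]
      rw [Sym2.mem_iff_exists]
      constructor
      · rintro ⟨y, rfl⟩; exact ⟨y, rfl⟩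
      · rintro ⟨y, rfl⟩; exact ⟨y, rfl⟩
    rw [himg, Finset.card_image_of_injective _ (fun a b hab => ?_), card_univ,
      Fintype.card_fin]
    obtain ⟨h1, h2⟩ | ⟨h1, h2⟩ := Sym2.eq_iff.1 hab
    · exact h2
    · rw [h2, ← h1]
  have hABinter : A ∩ B = {s(z1, z1)} := by
    ext e
    induction e using Sym2.ind with | _ x y =>
    simp only [Finset.mem_inter, hA, hB, mem_filter, mem_univ, true_and,
      Sym2.mk_isDiag_iff, Finset.mem_singleton, Sym2.mem_iff, Sym2.eq_iff]
    constructor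
    · rintro ⟨rfl, h | h⟩ <;> subst h <;> tauto
    · rintro (⟨rfl, rfl⟩ | ⟨rfl, rfl⟩) <;> tauto
  have hABcard : (A ∪ B).card = 2 * s - 1 := by
    have := Finset.card_union_add_card_inter A B
    rw [hABinter, hAcard, hBcard, Finset.card_singleton] at this
    omega
  have hCnotin : s(z0, z2) ∉ A ∪ B := by
    simp only [Finset.mem_union, hA, hB, mem_filter, mem_univ, true_and,
      Sym2.mk_isDiag_iff, Sym2.mem_iff]
    push_neg
    exact ⟨h02, Ne.symm h01, h12⟩
  have hunion : (A ∪ B ∪ {s(z0, z2)}).card = 2 * s := by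
    rw [Finset.card_union_of_disjoint (Finset.disjoint_singleton_right.2 hCnotin),
      hABcard, Finset.card_singleton]
    omega
  have hfilter : univ.filter (Pred s z0 z1 z2) = univ \ (A ∪ B ∪ {s(z0, z2)}) := by
    ext e
    simp only [mem_filter, mem_univ, true_and, Finset.mem_sdiff, Finset.mem_union,
      Finset.mem_singleton, hA, hB, Pred]
    tauto
  rw [hfilter, Finset.card_sdiff_of_subset (Finset.subset_univ _), hunion, card_univ, Sym2.card,
    Fintype.card_fin, Nat.choose_two_right, Nat.add_sub_cancel, Nat.mul_comm]
  exact arith s hs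


end GRel

/-- For `s ≥ 3`, the ℂ-linear span of the quadratic relations
`D(i,j) − D(j,k) + D(k,l) − D(l,i)` for pairwise distinct `i, j, k, l` has dimension
`s(s−3)/2 = C(s,2) − s`. -/
theorem finrank_span_G_relations (s : ℕ) (hs : 3 ≤ s) :
    Module.finrank ℂ (Submodule.span ℂ
      {g : MvPolynomial (Sym2 (Fin s)) ℂ | ∃ i j k l : Fin s,
        i ≠ j ∧ i ≠ k ∧ i ≠ l ∧ j ≠ k ∧ j ≠ l ∧ k ≠ l ∧
        g = genericPrincMinor s i j - genericPrincMinor s j k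
            + genericPrincMinor s k l - genericPrincMinor s l i})
      = s * (s - 3) / 2 := by
  show finrank ℂ (Submodule.span ℂ (GRel.SetGen s)) = s * (s - 3) / 2
  refine le_antisymm (GRel.finrank_span_le s hs) ?_
  set z0 : Fin s := ⟨0, by omega⟩ with hz0
  set z1 : Fin s := ⟨1, by omega⟩ with hz1
  set z2 : Fin s := ⟨2, by omega⟩ with hz2
  have h01 : z0 ≠ z1 := by simp [hz0, hz1, Fin.ext_iff]
  have h02 : z0 ≠ z2 := by simp [hz0, hz2, Fin.ext_iff]
  have h12 : z1 ≠ z2 := by simp [hz1, hz2, Fin.ext_iff]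
  have hfd : FiniteDimensional ℂ (Submodule.span ℂ (GRel.SetGen s)) :=
    Submodule.finiteDimensional_of_le (GRel.span_le_upper s)
  let v : {e : Sym2 (Fin s) // GRel.Pred s z0 z1 z2 e} →
      (Submodule.span ℂ (GRel.SetGen s)) :=
    fun i => ⟨GRel.Fam s z0 z1 z2 (i : Sym2 (Fin s)),
      GRel.Fam_mem s h01 h02 h12 _ i.2⟩
  have hli : LinearIndependent ℂ v := by
    apply LinearIndependent.of_comp (Submodule.span ℂ (GRel.SetGen s)).subtype
    exact GRel.Fam_li s
  have hcard := hli.fintype_card_le_finrank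
  rwa [GRel.card_pred s h01 h02 h12 hs] at hcard
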